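/- arXiv:1204.0960 — 3 statements merged into one kernel-verified Lean document; each statement's English description precedes it below -/
import Mathlib

section
/- With the notation of the context: the map d' = π ∘ (d − d∘h∘d) ∘ ι satisfies d' ∘ d' = 0, and the maps f = π ∘ (id_C − d∘h) and g = (id_C − h∘d) ∘ ι are chain maps, i.e. f ∘ d = d' ∘ f and d ∘ g = g ∘ d'. -/
open Finsupp

/-- The complement of the two cancelled basis indices. -/
def cancelSet {I : Type*} (k l : I) : Set I := {i | i ≠ k ∧ i ≠ l}

variable {R : Type*} [CommRing R] {C : Type*} [AddCommGroup C] [Module R C]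
  {I : Type*}

/-- The inclusion `ι : C' → C` of the free module on the remaining basis vectors. -/
noncomputable def cancelIota (b : Module.Basis I R C) (k l : I) :
    ((cancelSet k l) →₀ R) →ₗ[R] C :=
  Finsupp.linearCombination R (fun i : cancelSet k l => b i.1)

/-- The projection `π : C → C'` killing `x_k` and `x_l` and fixing the other
basis vectors. -/
noncomputable def cancelPi (b : Module.Basis I R C) (k l : I) :
    C →ₗ[R] ((cancelSet k l) →₀ R) :=
  (Finsupp.lsubtypeDomain (cancelSet k l)) ∘ₗ (b.repr : C →ₗ[R] (I →₀ R))

/-- The map `h : C → C` with `h(x_l) = x_k` and `h(x_i) = 0` for `i ≠ l`. -/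
noncomputable def cancelH (b : Module.Basis I R C) (k l : I) : C →ₗ[R] C :=
  (LinearMap.toSpanSingleton R C (b k)) ∘ₗ (b.coord l)

/-- The reduced differential `d' = π ∘ (d - d∘h∘d) ∘ ι`. -/
noncomputable def cancelD (b : Module.Basis I R C) (k l : I) (d : C →ₗ[R] C) :
    ((cancelSet k l) →₀ R) →ₗ[R] ((cancelSet k l) →₀ R) :=
  (cancelPi b k l) ∘ₗ (d - d ∘ₗ (cancelH b k l) ∘ₗ d) ∘ₗ (cancelIota b k l)

/-- The chain map `f = π ∘ (id - d∘h) : C → C'`. -/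
noncomputable def cancelF (b : Module.Basis I R C) (k l : I) (d : C →ₗ[R] C) :
    C →ₗ[R] ((cancelSet k l) →₀ R) :=
  (cancelPi b k l) ∘ₗ (LinearMap.id - d ∘ₗ (cancelH b k l))

/-- The chain map `g = (id - h∘d) ∘ ι : C' → C`. -/
noncomputable def cancelG (b : Module.Basis I R C) (k l : I) (d : C →ₗ[R] C) :
    ((cancelSet k l) →₀ R) →ₗ[R] C :=
  (LinearMap.id - (cancelH b k l) ∘ₗ d) ∘ₗ (cancelIota b k l)

lemma iota_pi (b : Module.Basis I R C) {k l : I} (hkl : k ≠ l) (x : C) :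
    cancelIota b k l (cancelPi b k l x)
      = x - b.repr x k • b k - b.repr x l • b l := by
  classical
  have key : (cancelIota b k l ∘ₗ cancelPi b k l : C →ₗ[R] C)
      = LinearMap.id - (LinearMap.toSpanSingleton R C (b k)) ∘ₗ (b.coord k)
          - (LinearMap.toSpanSingleton R C (b l)) ∘ₗ (b.coord l) := by
    refine b.ext fun j => ?_
    by_cases hjk : j = k
    · subst hjk
      have h1 : (Finsupp.subtypeDomain (· ∈ cancelSet j l) (Finsupp.single j (1:R))) = 0 := by
        ext ⟨i, hi⟩
        rw [Finsupp.subtypeDomain_apply, Finsupp.single_eq_of_ne (fun e => hi.1 e)]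
        rfl
      have h2 : (Finsupp.single j (1:R)) l = 0 := by
        exact Finsupp.single_eq_of_ne hkl.symm
      have h3 : (Finsupp.single j (1:R)) j = 1 := Finsupp.single_eq_same
      simp [cancelIota, cancelPi, Finsupp.lsubtypeDomain, LinearMap.comp_apply,
        Module.Basis.repr_self, h1, h2, h3]
    · by_cases hjl : j = l
      · subst hjl
        have h1 : (Finsupp.subtypeDomain (· ∈ cancelSet k j) (Finsupp.single j (1:R))) = 0 := by
          ext ⟨i, hi⟩
          rw [Finsupp.subtypeDomain_apply, Finsupp.single_eq_of_ne (fun e => hi.2 e)]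
          rfl
        have h2 : (Finsupp.single j (1:R)) k = 0 := by
          exact Finsupp.single_eq_of_ne (Ne.symm hjk)
        have h3 : (Finsupp.single j (1:R)) j = 1 := Finsupp.single_eq_same
        simp [cancelIota, cancelPi, Finsupp.lsubtypeDomain, LinearMap.comp_apply,
          Module.Basis.repr_self, h1, h2, h3]
      · have hj : j ∈ cancelSet k l := ⟨hjk, hjl⟩
        have h1 : (Finsupp.subtypeDomain (· ∈ cancelSet k l) (Finsupp.single j (1:R)))
            = Finsupp.single (⟨j, hj⟩ : cancelSet k l) 1 := by
          ext ⟨i, hi⟩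
          rw [Finsupp.subtypeDomain_apply]
          simp only [Finsupp.single_apply, Subtype.mk.injEq]
        have h2 : (Finsupp.single j (1:R)) k = 0 := by
          exact Finsupp.single_eq_of_ne (Ne.symm hjk)
        have h3 : (Finsupp.single j (1:R)) l = 0 := by
          exact Finsupp.single_eq_of_ne (Ne.symm hjl)
        simp [cancelIota, cancelPi, Finsupp.lsubtypeDomain, LinearMap.comp_apply,
          Module.Basis.repr_self, h1, h2, h3]
  have := LinearMap.ext_iff.mp key x
  simpa [LinearMap.comp_apply, LinearMap.sub_apply, LinearMap.toSpanSingleton_apply,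
    Module.Basis.coord_apply] using this

/-- cancellation lemma, algebraic part: `d' ∘ d' = 0`, and
`f` and `g` are chain maps: `f ∘ d = d' ∘ f` and `d ∘ g = g ∘ d'`. -/
theorem cancellation_chain_maps (b : Module.Basis I R C) (d : C →ₗ[R] C)
    (hd : d ∘ₗ d = 0) (k l : I) (hkl : k ≠ l) (hdkl : b.repr (d (b k)) l = 1) :
    (cancelD b k l d) ∘ₗ (cancelD b k l d) = 0 ∧
    (cancelF b k l d) ∘ₗ d = (cancelD b k l d) ∘ₗ (cancelF b k l d) ∧
    d ∘ₗ (cancelG b k l d) = (cancelG b k l d) ∘ₗ (cancelD b k l d) := by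
  set h := cancelH b k l with hh_def
  set d1 : C →ₗ[R] C := d - d ∘ₗ h ∘ₗ d with hd1_def
  have hdd : ∀ x : C, d (d x) = 0 := fun x => by
    simpa [LinearMap.comp_apply] using LinearMap.ext_iff.mp hd x
  have hH : ∀ x : C, h x = b.repr x l • b k := fun x => rfl
  have hd1 : ∀ x : C, d1 x = d x - b.repr (d x) l • d (b k) := by
    intro x
    simp [hd1_def, LinearMap.sub_apply, LinearMap.comp_apply, hH, map_smul]
  have hdd1 : ∀ x : C, d (d1 x) = 0 := by
    intro x
    rw [hd1, map_sub, map_smul, hdd, hdd, smul_zero, sub_zero]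
  have hreprl : ∀ x : C, b.repr (d1 x) l = 0 := by
    intro x
    rw [hd1, map_sub, map_smul, Finsupp.sub_apply, Finsupp.smul_apply, hdkl,
      smul_eq_mul, mul_one, sub_self]
  have hd1k : d1 (b k) = 0 := by
    rw [hd1, hdkl, one_smul, sub_self]
  have hd1d1 : ∀ x : C, d1 (d1 x) = 0 := by
    intro x
    rw [hd1 (d1 x), hdd1, map_zero, Finsupp.zero_apply, zero_smul, sub_zero]
  have hDapp : ∀ y, cancelD b k l d y = cancelPi b k l (d1 (cancelIota b k l y)) :=
    fun y => rfl
  have hFapp : ∀ x, cancelF b k l d x = cancelPi b k l (x - b.repr x l • d (b k)) := by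
    intro x
    simp [cancelF, LinearMap.comp_apply, LinearMap.sub_apply, ← hh_def, hH, map_smul]
  have hGapp : ∀ y, cancelG b k l d y
      = cancelIota b k l y - b.repr (d (cancelIota b k l y)) l • b k := by
    intro y
    simp [cancelG, LinearMap.comp_apply, LinearMap.sub_apply, ← hh_def, hH]
  refine ⟨?_, ?_, ?_⟩
  · apply LinearMap.ext; intro y
    set z := d1 (cancelIota b k l y) with hz
    have h1 : cancelIota b k l (cancelPi b k l z) = z - b.repr z k • b k := by
      rw [iota_pi b hkl, hreprl, zero_smul, sub_zero]
    rw [LinearMap.comp_apply, LinearMap.zero_apply, hDapp, hDapp, ← hz, h1,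
      map_sub, map_smul, hd1d1, hd1k, smul_zero, sub_zero, map_zero]
  · apply LinearMap.ext; intro x
    rw [LinearMap.comp_apply, hFapp, LinearMap.comp_apply, hDapp, hFapp]
    congr 1
    set w := x - b.repr x l • d (b k) with hw
    have hwl : b.repr w l = 0 := by
      rw [hw, map_sub, map_smul, Finsupp.sub_apply, Finsupp.smul_apply, hdkl,
        smul_eq_mul, mul_one, sub_self]
    have h1 : cancelIota b k l (cancelPi b k l w) = w - b.repr w k • b k := by
      rw [iota_pi b hkl, hwl, zero_smul, sub_zero]
    have hdw : d w = d x := by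
      rw [hw, map_sub, map_smul, hdd, smul_zero, sub_zero]
    rw [h1, map_sub, map_smul, hd1k, smul_zero, sub_zero, hd1, hdw]
  · apply LinearMap.ext; intro y
    rw [LinearMap.comp_apply, LinearMap.comp_apply, hDapp]
    set z := d1 (cancelIota b k l y) with hz
    have h1 : cancelIota b k l (cancelPi b k l z) = z - b.repr z k • b k := by
      rw [iota_pi b hkl, hreprl, zero_smul, sub_zero]
    have hdz : d z = 0 := by rw [hz]; exact hdd1 _
    have hL : d (cancelG b k l d y) = z := by
      rw [hGapp, map_sub, map_smul, hz, hd1]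
    have hR : cancelG b k l d (cancelPi b k l z) = z := by
      rw [hGapp, h1, map_sub, map_smul, hdz, zero_sub, map_neg, map_smul,
        Finsupp.neg_apply, Finsupp.smul_apply, hdkl, smul_eq_mul, mul_one,
        neg_smul, sub_neg_eq_add, sub_add_cancel]
    rw [hL, hR]
end

section
/- With the notation of the context: the reduced differential d' is filtered with respect to the filtration induced on C', and its filtration degree is no less than that of d. Precisely, for every a ∈ C' and every p ≥ 0: if ι(a) ∈ F^p then ι(d'(a)) ∈ F^p; and moreover if d(ι(a)) ∈ F^p then ι(d'(a)) ∈ F^p. -/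
open Finsupp

variable {R : Type*} [CommRing R] {C : Type*} [AddCommGroup C] [Module R C]
  {I : Type*}

/-- cancellation lemma, filtered part: given a decreasing,
basis-adapted, `d`-invariant filtration `F` with `F 0 = ⊤` such that
`x_l ∈ F p → d x_k ∈ F p`, the reduced differential `d'` is filtered for the
induced filtration on `C'`, and its filtration degree is no less than that of
`d`. -/
theorem cancellation_filtered_differential (b : Module.Basis I R C) (d : C →ₗ[R] C)
    (hd : d ∘ₗ d = 0) (k l : I) (hkl : k ≠ l) (hdkl : b.repr (d (b k)) l = 1)
    (F : ℕ → Submodule R C) (hF0 : F 0 = ⊤) (hFmono : Antitone F)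
    (hFd : ∀ p, ∀ c ∈ F p, d c ∈ F p)
    (hFadapted : ∀ p, F p = Submodule.span R (b '' {i : I | b i ∈ F p}))
    (hFkl : ∀ p, b l ∈ F p → d (b k) ∈ F p) :
    ∀ (a : (cancelSet k l) →₀ R) (p : ℕ),
      (cancelIota b k l a ∈ F p → cancelIota b k l (cancelD b k l d a) ∈ F p) ∧
      (d (cancelIota b k l a) ∈ F p → cancelIota b k l (cancelD b k l d a) ∈ F p) := by

  have lemA : ∀ p (v : C), v ∈ F p → ∀ i, b.repr v i ≠ 0 → b i ∈ F p := by
    intro p v hv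
    rw [hFadapted p] at hv
    induction hv using Submodule.span_induction with
    | mem x hx =>
      obtain ⟨j, hj, rfl⟩ := hx
      intro i hi
      by_cases hij : i = j
      · subst hij; exact hj
      · exfalso; apply hi
        simp [Finsupp.single_apply, Ne.symm hij]
    | zero => intro i hi; simp at hi
    | add x y hx hy ihx ihy =>
      intro i hi
      rw [map_add, Finsupp.add_apply] at hi
      by_cases h0 : b.repr x i = 0
      · exact ihy i (by intro h; apply hi; rw [h0, h, add_zero])
      · exact ihx i h0
    | smul r x hx ih =>
      intro i hi
      rw [map_smul, Finsupp.smul_apply, smul_eq_mul] at hi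
      exact ih i (right_ne_zero_of_mul hi)
  have lemB : ∀ p (v : C), v ∈ F p → cancelIota b k l (cancelPi b k l v) ∈ F p := by
    intro p v hv
    rw [cancelIota, cancelPi]
    simp only [LinearMap.comp_apply, Finsupp.linearCombination_apply,
      LinearMap.coe_coe]
    apply Submodule.finsuppSum_mem
    intro i hi
    apply Submodule.smul_mem
    apply lemA p v hv
    simpa [Finsupp.lsubtypeDomain, Finsupp.subtypeDomain_apply] using hi
  have key : ∀ (a : (cancelSet k l) →₀ R) (p : ℕ),
      d (cancelIota b k l a) ∈ F p → cancelIota b k l (cancelD b k l d a) ∈ F p := by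
    intro a p hc
    set c := d (cancelIota b k l a) with hcdef
    have hD : cancelD b k l d a = cancelPi b k l (c - (b.repr c l) • d (b k)) := by
      simp [cancelD, cancelH, LinearMap.comp_apply, LinearMap.sub_apply,
        LinearMap.toSpanSingleton_apply, Module.Basis.coord_apply, map_smul, hcdef]
    have hw : c - (b.repr c l) • d (b k) ∈ F p := by
      apply Submodule.sub_mem _ hc
      by_cases h0 : b.repr c l = 0
      · simp [h0]
      · exact Submodule.smul_mem _ _ (hFkl p (lemA p c hc l h0))
    rw [hD]
    exact lemB p _ hw
  intro a p
  exact ⟨fun ha => key a p (hFd p _ ha), key a p⟩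
end

section
/- Let M be a module over Λ_m, let v ∈ M, and let S ⊆ {1,…,m} be a subset such that X_S · v ≠ 0. Then the family (X_{S'} · v), indexed by all subsets S' ⊆ S, consists of 2^{|S|} elements of M that are linearly independent over F₂. Equivalently, for any nonempty collection of distinct subsets S₁,…,S_j of S one has X_{S₁}·v + ⋯ + X_{S_j}·v ≠ 0. -/
/-- `Λ_m = F₂[X₁,…,X_m]/(X₁²,…,X_m²)`. -/
abbrev Lambda (m : ℕ) : Type :=
  MvPolynomial (Fin m) (ZMod 2) ⧸
    Ideal.span (Set.range fun i : Fin m =>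
      (MvPolynomial.X i : MvPolynomial (Fin m) (ZMod 2)) ^ 2)

/-- The class of the variable `X_i` in `Λ_m`. -/
noncomputable def lamX {m : ℕ} (i : Fin m) : Lambda m :=
  Ideal.Quotient.mk _ (MvPolynomial.X i)

/-- `X_S = ∏_{i ∈ S} X_i` in `Λ_m` (with `X_∅ = 1`). -/
noncomputable def lamXS {m : ℕ} (S : Finset (Fin m)) : Lambda m :=
  ∏ i ∈ S, lamX i

lemma lamX_sq {m : ℕ} (i : Fin m) : lamX i * lamX i = 0 := by
  rw [lamX, ← map_mul, ← sq, Ideal.Quotient.eq_zero_iff_mem]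
  exact Ideal.subset_span ⟨i, rfl⟩

lemma lamXS_mul_of_mem {m : ℕ} {A B : Finset (Fin m)} {i : Fin m}
    (hA : i ∈ A) (hB : i ∈ B) : lamXS A * lamXS B = 0 := by
  rw [lamXS, lamXS, ← Finset.mul_prod_erase A lamX hA,
    ← Finset.mul_prod_erase B lamX hB]
  calc lamX i * (∏ j ∈ A.erase i, lamX j) * (lamX i * ∏ j ∈ B.erase i, lamX j)
      = (lamX i * lamX i) *
        ((∏ j ∈ A.erase i, lamX j) * ∏ j ∈ B.erase i, lamX j) := by ring
    _ = 0 := by rw [lamX_sq]; ring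

lemma lamXS_mul_disjoint {m : ℕ} {A B : Finset (Fin m)} (h : Disjoint A B) :
    lamXS A * lamXS B = lamXS (A ∪ B) := by
  rw [lamXS, lamXS, lamXS, Finset.prod_union h]

/-- if `M` is a `Λ_m`-module, `v ∈ M` and `S` is a set of
indices with `X_S · v ≠ 0`, then the `2^{|S|}` elements `X_{S'} · v`, for
`S' ⊆ S`, are linearly independent over `F₂`: every nonempty sum of distinct
such elements is nonzero. -/
theorem lambda_monomials_linearIndependent (m : ℕ) (hm : 1 ≤ m)
    (M : Type) [AddCommGroup M] [Module (Lambda m) M]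
    (v : M) (S : Finset (Fin m)) (hS : lamXS S • v ≠ 0) :
    ∀ 𝒮 : Finset (Finset (Fin m)), 𝒮.Nonempty → (∀ T ∈ 𝒮, T ⊆ S) →
      ∑ T ∈ 𝒮, lamXS T • v ≠ 0 := by
  intro 𝒮 hne hsub h
  obtain ⟨T₀, hT₀, hmin⟩ := 𝒮.exists_min_image Finset.card hne
  apply hS
  have key : lamXS (S \ T₀) • ∑ T ∈ 𝒮, lamXS T • v = lamXS S • v := by
    rw [Finset.smul_sum]
    have : ∀ T ∈ 𝒮, lamXS (S \ T₀) • lamXS T • v =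
        if T = T₀ then lamXS S • v else 0 := by
      intro T hT
      by_cases hTT : T = T₀
      · subst hTT
        rw [if_pos rfl, ← mul_smul, lamXS_mul_disjoint Finset.sdiff_disjoint,
          Finset.sdiff_union_of_subset (hsub T hT)]
      · rw [if_neg hTT]
        have hns : ¬ T ⊆ T₀ := by
          intro hsub'
          exact hTT (Finset.eq_of_subset_of_card_le hsub' (hmin T hT))
        obtain ⟨i, hiT, hiT₀⟩ := Finset.not_subset.mp hns
        have hiS : i ∈ S \ T₀ := Finset.mem_sdiff.mpr ⟨hsub T hT hiT, hiT₀⟩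
        rw [← mul_smul, lamXS_mul_of_mem hiS hiT]
        exact zero_smul (Lambda m) v
    rw [Finset.sum_congr rfl this, Finset.sum_ite_eq' 𝒮 T₀, if_pos hT₀]
  rw [← key, h, smul_zero]
end
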